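/- arXiv:2409.13608 — 2 statements merged into one kernel-verified Lean document; each statement's English description precedes it below -/
import Mathlib

section
/- For every z = (v; y) ∈ ℝ^{m₁+m₂} there exists a unique u = (u₁; u₂) ∈ ℝ^{m₁+m₂} satisfying u = F((E − G)u + Gz); explicitly, u₁ = prox_{βg}(v − βDᵀy) and u₂ = prox_{η ι_d*}(2ηDu₁ − ηDv + y). Hence the operator T_G : ℝ^{m₁+m₂} → ℝ^{m₁+m₂}, T_G(z) := the unique such u, is well-defined. -/
noncomputable section

open scoped BigOperators

/-- `ℝ^n` with the Euclidean structure. -/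
abbrev Euc (n : ℕ) := EuclideanSpace ℝ (Fin n)

/-- Matrix–vector multiplication, landing in Euclidean space. -/
def mVec {p q : ℕ} (A : Matrix (Fin p) (Fin q) ℝ) (v : Euc q) : Euc p :=
  WithLp.toLp 2 (fun i => ∑ j, A i j * v j)

/-- The set of proximity points of an extended-real-valued function `ψ` at `x`:
`prox_ψ(x) = argmin_u {½‖u−x‖² + ψ(u)}`. -/
def proxSet {n : ℕ} (ψ : Euc n → EReal) (x : Euc n) : Set (Euc n) :=
  {p | ∀ u : Euc n,
    ((1 / 2 * ‖p - x‖ ^ 2 : ℝ) : EReal) + ψ p ≤ ((1 / 2 * ‖u - x‖ ^ 2 : ℝ) : EReal) + ψ u}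

/-- The indicator function `ι_d` of the set `{x | x ≥ d}` (componentwise). -/
def iotaInd {n : ℕ} (d : Euc n) : Euc n → EReal :=
  fun y => if ∀ i, d i ≤ y i then (0 : EReal) else ⊤

/-- The convex (Fenchel) conjugate `ψ*(x) = sup_u {⟨x,u⟩ − ψ(u)}`. -/
def conjFn {n : ℕ} (ψ : Euc n → EReal) : Euc n → EReal :=
  fun x => ⨆ u : Euc n, (((inner ℝ x u : ℝ) : EReal) - ψ u)

open Metric Set

section Aux

variable {E : Type*} [NormedAddCommGroup E] [InnerProductSpace ℝ E]

/-- Uniqueness of the minimizer of `½‖·-x‖² + f` over a convex set. -/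
lemma prox_unique' {C : Set E} {f : E → ℝ} (hf : ConvexOn ℝ C f) (x : E) {p q : E}
    (hp : p ∈ C) (hq : q ∈ C)
    (hpm : ∀ u ∈ C, 1/2*‖p-x‖^2 + f p ≤ 1/2*‖u-x‖^2 + f u)
    (hqm : ∀ u ∈ C, 1/2*‖q-x‖^2 + f q ≤ 1/2*‖u-x‖^2 + f u) : p = q := by
  set m := (1/2:ℝ) • p + (1/2:ℝ) • q with hm
  have hmem : m ∈ C := hf.1 hp hq (by norm_num) (by norm_num) (by norm_num)
  have hfm : f m ≤ 1/2 * f p + 1/2 * f q := by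
    have h2 := hf.2 hp hq (by norm_num : (0:ℝ) ≤ 1/2) (by norm_num : (0:ℝ) ≤ 1/2)
      (by norm_num : (1:ℝ)/2 + 1/2 = 1)
    simpa only [smul_eq_mul, ← hm] using h2
  have hid : m - x = (1/2:ℝ) • ((p - x) + (q - x)) := by
    rw [hm]; module
  have hpar := parallelogram_law_with_norm ℝ (p - x) (q - x)
  have hsub : (p - x) - (q - x) = p - q := by abel
  rw [hsub] at hpar
  have hnm : ‖m - x‖^2 = (1/4) * ‖(p-x) + (q-x)‖^2 := by
    rw [hid, norm_smul]
    norm_num; ring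
  have h1 := hpm m hmem
  have h2 := hqm m hmem
  have : ‖p - q‖ = 0 := by nlinarith [sq_nonneg ‖p-q‖, norm_nonneg (p-q)]
  rwa [norm_sub_eq_zero_iff] at this

/-- Existence of a global minimizer of `½‖·-x‖² + f` for a finite convex `f`. -/
lemma prox_exists' [FiniteDimensional ℝ E] {f : E → ℝ} (hf : ConvexOn ℝ univ f) (x : E) :
    ∃ p : E, ∀ u : E, 1/2*‖p-x‖^2 + f p ≤ 1/2*‖u-x‖^2 + f u := by
  rcases subsingleton_or_nontrivial E with h | h
  · exact ⟨x, fun u => le_of_eq (by rw [Subsingleton.elim u x])⟩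
  have hcont : Continuous f :=
    continuousOn_univ.mp (ConvexOn.continuousOn isOpen_univ hf)
  obtain ⟨w0, hw0, hw0min⟩ := (isCompact_sphere x 1).exists_isMinOn
      (NormedSpace.sphere_nonempty.mpr zero_le_one) hcont.continuousOn
  set c := f w0 with hc
  set K := |c - f x| + 1 with hK
  have hK1 : 1 ≤ K := by rw [hK]; exact le_add_of_nonneg_left (abs_nonneg _)
  set R := max 1 (2*K + 1) with hR
  have hout : ∀ u : E, R < ‖u - x‖ → f x < 1/2*‖u-x‖^2 + f u := by
    intro u hu
    set r := ‖u - x‖ with hr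
    have hr1 : (1:ℝ) ≤ r := le_trans (le_max_left _ _) hu.le
    have hr0 : (0:ℝ) < r := lt_of_lt_of_le one_pos hr1
    have hw : x + r⁻¹ • (u - x) ∈ sphere x 1 := by
      have hn : ‖r⁻¹ • (u - x)‖ = 1 := by
        rw [norm_smul, norm_inv, Real.norm_eq_abs, abs_of_pos hr0, ← hr,
          inv_mul_cancel₀ hr0.ne']
      simpa [mem_sphere_iff_norm, add_sub_cancel_left] using hn
    have hid : x + r⁻¹ • (u - x) = (1 - r⁻¹) • x + r⁻¹ • u := by module
    have hconv := hf.2 (mem_univ x) (mem_univ u)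
      (by simp; exact inv_le_one_of_one_le₀ hr1 : (0:ℝ) ≤ 1 - r⁻¹)
      (le_of_lt (inv_pos.mpr hr0)) (by ring)
    rw [← hid] at hconv
    have hcle : c ≤ f (x + r⁻¹ • (u - x)) := hw0min hw
    have hfu : f x + r * (c - f x) ≤ f u := by
      have h := hcle.trans hconv
      have := mul_le_mul_of_nonneg_left h hr0.le
      simp only [smul_eq_mul] at this
      rw [mul_add, ← mul_assoc, ← mul_assoc, mul_sub, mul_inv_cancel₀ hr0.ne'] at this
      nlinarith
    have habs : -(K) ≤ c - f x := by
      rw [hK]; nlinarith [neg_abs_le (c - f x)]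
    have hRr : 2*K + 1 < r := lt_of_le_of_lt (le_max_right _ _) hu
    nlinarith [sq_nonneg r]
  have hR0 : (0:ℝ) ≤ R := le_trans zero_le_one (le_max_left _ _)
  obtain ⟨p, hpB, hpmin⟩ := (isCompact_closedBall x R).exists_isMinOn
      ⟨x, Metric.mem_closedBall_self hR0⟩
      (Continuous.continuousOn (by continuity : Continuous fun u => 1/2*‖u-x‖^2 + f u))
  refine ⟨p, fun u => ?_⟩
  by_cases hu : u ∈ closedBall x R
  · exact hpmin hu
  · have hRu : R < ‖u - x‖ := by
      simpa [Metric.mem_closedBall, dist_eq_norm] using hu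
    have hx : (1/2:ℝ)*‖p-x‖^2 + f p ≤ 1/2*‖x-x‖^2 + f x :=
      hpmin (Metric.mem_closedBall_self hR0)
    have := hout u hRu
    simp at hx
    linarith

end Aux

lemma inner_euc {n : ℕ} (x y : Euc n) : (inner ℝ x y : ℝ) = ∑ i, x i * y i := by
  simp [PiLp.inner_apply, RCLike.inner_apply, conj_trivial, mul_comm]

lemma conj_eval {n : ℕ} (d w : Euc n) :
    conjFn (iotaInd d) w = if ∀ i, w i ≤ 0 then ((inner ℝ w d : ℝ) : EReal) else ⊤ := by
  rw [conjFn]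
  split_ifs with h
  · apply le_antisymm
    · apply iSup_le
      intro u
      rw [iotaInd]
      split_ifs with hu
      · rw [sub_zero, EReal.coe_le_coe_iff, inner_euc, inner_euc]
        exact Finset.sum_le_sum fun i _ =>
          mul_le_mul_of_nonpos_left (hu i) (h i)
      · simp [EReal.sub_top]
    · refine le_iSup_of_le d ?_
      rw [iotaInd, if_pos fun i => le_refl _, sub_zero]
  · push_neg at h
    obtain ⟨i, hi⟩ := h
    rw [iSup_eq_top]
    intro b hb
    induction b using EReal.rec with
    | bot =>
      refine ⟨d, ?_⟩
      rw [iotaInd, if_pos fun j => le_refl _, sub_zero]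
      exact bot_lt_iff_ne_bot.mpr (EReal.coe_ne_bot _)
    | coe r =>
      set t : ℝ := (r - inner ℝ w d) / (w i) + 1 with ht
      have hwi : (0:ℝ) < w i := hi
      set s : ℝ := max t 0 with hs
      set uu : Euc n := d + s • EuclideanSpace.single i (1:ℝ) with huu
      refine ⟨uu, ?_⟩
      have happ : ∀ j, uu j = d j + s * (EuclideanSpace.single i (1:ℝ)) j := by
        intro j; rw [huu]; rfl
      have hmem : ∀ j, d j ≤ uu j := by
        intro j
        rw [happ j]
        rcases eq_or_ne j i with rfl | hj
        · simp [EuclideanSpace.single_apply]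
          exact le_max_right _ _
        · simp [EuclideanSpace.single_apply, hj]
      rw [iotaInd, if_pos hmem, sub_zero]
      have hsingle : (inner ℝ w (EuclideanSpace.single i (1:ℝ)) : ℝ) = w i := by
        rw [inner_euc, Finset.sum_eq_single i]
        · simp [EuclideanSpace.single_apply]
        · intro j _ hj; simp [EuclideanSpace.single_apply, hj]
        · intro hni; exact absurd (Finset.mem_univ i) hni
      have hval : (inner ℝ w uu : ℝ) = inner ℝ w d + s * w i := by
        rw [huu, inner_add_right, real_inner_smul_right, hsingle]
      rw [hval, EReal.coe_lt_coe_iff]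
      have htle : t ≤ s := le_max_left _ _
      have h1 : r < inner ℝ w d + t * w i := by
        rw [ht]; field_simp; linarith
      nlinarith [mul_le_mul_of_nonneg_right htle hwi.le]
    | top => exact absurd hb (lt_irrefl _)

lemma psi2_eval {n : ℕ} (d : Euc n) {η : ℝ} (hη : 0 < η) (w : Euc n) :
    ((η : ℝ) : EReal) * conjFn (iotaInd d) w
      = if ∀ i, w i ≤ 0 then ((η * inner ℝ w d : ℝ) : EReal) else ⊤ := by
  rw [conj_eval]
  split_ifs with h
  · rw [← EReal.coe_mul]
  · exact EReal.mul_top_of_pos (by exact_mod_cast hη)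

lemma clamp_min (a c s : ℝ) (hs : s ≤ 0) :
    1/2*(min 0 (a-c) - a)^2 + c * min 0 (a-c) ≤ 1/2*(s-a)^2 + c*s := by
  rcases le_total (a - c) 0 with h | h
  · rw [min_eq_right h]; nlinarith [sq_nonneg (s - (a - c))]
  · rw [min_eq_left h]; nlinarith [mul_nonneg h (neg_nonneg.mpr hs)]

lemma norm_sq_euc {n : ℕ} (x : Euc n) : ‖x‖^2 = ∑ i, (x i)^2 := by
  rw [PiLp.norm_sq_eq_of_L2]
  congr 1; ext i; rw [Real.norm_eq_abs, sq_abs]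

/-- Existence and uniqueness of the second proximity point. -/
lemma prox2 {n : ℕ} (d : Euc n) {η : ℝ} (hη : 0 < η) (a : Euc n) :
    ∃! p : Euc n, p ∈ proxSet (fun w => ((η : ℝ) : EReal) * conjFn (iotaInd d) w) a := by
  classical
  set q : Euc n := WithLp.toLp 2 (fun i => min 0 (a i - η * d i)) with hq
  have hqC : ∀ i, q i ≤ 0 := fun i => min_le_left _ _
  -- real minimality of q over C
  have hrmin : ∀ u : Euc n, (∀ i, u i ≤ 0) →
      1/2*‖q-a‖^2 + η * inner ℝ q d ≤ 1/2*‖u-a‖^2 + η * inner ℝ u d := by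
    intro u hu
    have hL : ∀ w : Euc n, 1/2*‖w-a‖^2 + η * inner ℝ w d
        = ∑ i, (1/2*(w i - a i)^2 + (η * d i) * w i) := by
      intro w
      rw [norm_sq_euc, inner_euc, Finset.mul_sum, Finset.mul_sum, ← Finset.sum_add_distrib]
      congr 1; ext i
      have : (w - a) i = w i - a i := rfl
      rw [this]; ring
    rw [hL q, hL u]
    refine Finset.sum_le_sum fun i _ => ?_
    have hqi : q i = min 0 (a i - η * d i) := rfl
    rw [hqi]
    exact clamp_min (a i) (η * d i) (u i) (hu i)
  have hqmem : q ∈ proxSet (fun w => ((η : ℝ) : EReal) * conjFn (iotaInd d) w) a := by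
    intro u
    by_cases hu : ∀ i, u i ≤ 0
    · simp only [psi2_eval d hη]
      rw [if_pos hqC, if_pos hu, ← EReal.coe_add, ← EReal.coe_add, EReal.coe_le_coe_iff]
      exact hrmin u hu
    · simp only [psi2_eval d hη]
      rw [if_neg hu, EReal.coe_add_top]
      exact le_top
  refine ⟨q, hqmem, ?_⟩
  intro p hp
  have hpC : ∀ i, p i ≤ 0 := by
    by_contra hc
    have hthis := hp q
    simp only [psi2_eval d hη] at hthis
    rw [if_neg hc, if_pos hqC, EReal.coe_add_top, ← EReal.coe_add] at hthis
    exact (EReal.coe_lt_top _).not_ge hthis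
  -- real minimality of p over C
  have hpmin : ∀ u : Euc n, (∀ i, u i ≤ 0) →
      1/2*‖p-a‖^2 + η * inner ℝ p d ≤ 1/2*‖u-a‖^2 + η * inner ℝ u d := by
    intro u hu
    have hthis := hp u
    simp only [psi2_eval d hη] at hthis
    rwa [if_pos hpC, if_pos hu, ← EReal.coe_add, ← EReal.coe_add,
      EReal.coe_le_coe_iff] at hthis
  -- convexity data
  have hCconv : Convex ℝ {w : Euc n | ∀ i, w i ≤ 0} := by
    intro x hx y hy s t hs ht hst i
    have : (s • x + t • y) i = s * x i + t * y i := rfl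
    rw [mem_setOf_eq] at hx hy
    exact this ▸ add_nonpos (mul_nonpos_of_nonneg_of_nonpos hs (hx i))
      (mul_nonpos_of_nonneg_of_nonpos ht (hy i))
  have hfconv : ConvexOn ℝ {w : Euc n | ∀ i, w i ≤ 0} (fun w => η * (inner ℝ w d : ℝ)) := by
    refine ⟨hCconv, fun x _ y _ s t hs ht hst => ?_⟩
    have hlin : (inner ℝ (s • x + t • y) d : ℝ) = s * inner ℝ x d + t * inner ℝ y d := by
      rw [inner_add_left, real_inner_smul_left, real_inner_smul_left]
    show η * (inner ℝ (s • x + t • y) d : ℝ) ≤ s • (η * inner ℝ x d) + t • (η * inner ℝ y d)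
    simp only [smul_eq_mul]
    rw [hlin]; ring_nf
    exact le_refl _
  exact prox_unique' hfconv a hpC hqC
    (fun u hu => hpmin u hu) (fun u hu => hrmin u hu)

/-- for every z = (v; y) there exists a unique u = (u₁; u₂) with
u = F((E − G)u + Gz), explicitly u₁ = prox_{βg}(v − βDᵀy) and
u₂ = prox_{η ι_d*}(2ηDu₁ − ηDv + y); hence T_G is well-defined. -/
theorem stmt2 {m₁ m₂ : ℕ} (D : Matrix (Fin m₂) (Fin m₁) ℝ) (d : Euc m₂)
    (g : Euc m₁ → ℝ) (hgconv : ConvexOn ℝ Set.univ g)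
    (β η : ℝ) (hβ : 0 < β) (hη : 0 < η)
    (v : Euc m₁) (y : Euc m₂) :
    ∃! u : Euc m₁ × Euc m₂,
      u.1 ∈ proxSet (fun w => ((β * g w : ℝ) : EReal)) (v - β • mVec D.transpose y) ∧
      u.2 ∈ proxSet (fun w => ((η : ℝ) : EReal) * conjFn (iotaInd d) w)
              ((2 * η) • mVec D u.1 - η • mVec D v + y) := by
  -- first coordinate
  set x₁ := v - β • mVec D.transpose y with hx₁
  have hfconv : ConvexOn ℝ Set.univ (fun w : Euc m₁ => β * g w) := by
    simpa [smul_eq_mul] using hgconv.smul hβ.le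
  obtain ⟨p₁, hp₁⟩ := prox_exists' hfconv x₁
  have hp₁mem : p₁ ∈ proxSet (fun w => ((β * g w : ℝ) : EReal)) x₁ := by
    intro u
    rw [← EReal.coe_add, ← EReal.coe_add, EReal.coe_le_coe_iff]
    exact hp₁ u
  have hp₁uniq : ∀ p, p ∈ proxSet (fun w => ((β * g w : ℝ) : EReal)) x₁ → p = p₁ := by
    intro p hp
    refine prox_unique' hfconv x₁ (Set.mem_univ p) (Set.mem_univ p₁)
      (fun u _ => ?_) (fun u _ => hp₁ u)
    have := hp u
    rwa [← EReal.coe_add, ← EReal.coe_add, EReal.coe_le_coe_iff] at this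
  obtain ⟨p₂, hp₂mem, hp₂uniq⟩ := prox2 d hη ((2 * η) • mVec D p₁ - η • mVec D v + y)
  refine ⟨(p₁, p₂), ⟨hp₁mem, hp₂mem⟩, ?_⟩
  rintro ⟨q₁, q₂⟩ ⟨h1, h2⟩
  have e1 : q₁ = p₁ := hp₁uniq q₁ h1
  subst e1
  have e2 : q₂ = p₂ := hp₂uniq q₂ h2
  subst e2
  rfl
end
end

section
/- The fixed-point sets of T_W and of T_{β,η} coincide: Fix(T_W) = Fix(T_{β,η}), where T_W := T_G ∘ (I − W⁻¹∇r). -/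
noncomputable section

open scoped BigOperators

/-- The block operator `W = P⁻¹G = [[(1/β)I, −Dᵀ],[−D, (1/η)I]]` on `ℝ^{m₁} × ℝ^{m₂}`. -/
def Wapp {m₁ m₂ : ℕ} (β η : ℝ) (D : Matrix (Fin m₂) (Fin m₁) ℝ)
    (z : Euc m₁ × Euc m₂) : Euc m₁ × Euc m₂ :=
  ((1 / β) • z.1 - mVec D.transpose z.2, -(mVec D z.1) + (1 / η) • z.2)

/-- The bilinear form `⟨z, Ww⟩` associated with `W`. -/
def ipW {m₁ m₂ : ℕ} (β η : ℝ) (D : Matrix (Fin m₂) (Fin m₁) ℝ)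
    (z w : Euc m₁ × Euc m₂) : ℝ :=
  (inner ℝ z.1 (Wapp β η D w).1 : ℝ) + (inner ℝ z.2 (Wapp β η D w).2 : ℝ)

/-- The `W`-weighted norm `‖z‖_W = ⟨z, Wz⟩^{1/2}`. -/
def normW {m₁ m₂ : ℕ} (β η : ℝ) (D : Matrix (Fin m₂) (Fin m₁) ℝ)
    (z : Euc m₁ × Euc m₂) : ℝ :=
  Real.sqrt (ipW β η D z z)

/-! ### Auxiliary lemmas -/

lemma mVec_smul {p q : ℕ} (A : Matrix (Fin p) (Fin q) ℝ) (c : ℝ) (x : Euc q) :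
    mVec A (c • x) = c • mVec A x := by
  ext i
  simp [mVec, Finset.mul_sum]
  congr 1; funext j; ring

lemma mVec_sub {p q : ℕ} (A : Matrix (Fin p) (Fin q) ℝ) (x y : Euc q) :
    mVec A (x - y) = mVec A x - mVec A y := by
  ext i
  simp [mVec, mul_sub, Finset.sum_sub_distrib]

lemma prox_unique {n : ℕ} {ψ : Euc n → EReal} {x p q : Euc n}
    (hp : p ∈ proxSet ψ x) (hq : q ∈ proxSet ψ x)
    {a b : ℝ} (hpa : ψ p = (a : EReal)) (hqb : ψ q = (b : EReal))
    (hmid : ψ ((2⁻¹ : ℝ) • (p + q)) ≤ (((a + b) / 2 : ℝ) : EReal)) : p = q := by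
  set m : Euc n := (2⁻¹ : ℝ) • (p + q) with hm
  have h1 : (1 / 2 * ‖p - x‖ ^ 2 + a : ℝ) ≤ (1 / 2 * ‖q - x‖ ^ 2 + b : ℝ) := by
    have := hp q
    rw [hpa, hqb, ← EReal.coe_add, ← EReal.coe_add] at this
    exact_mod_cast this
  have h2 : (1 / 2 * ‖q - x‖ ^ 2 + b : ℝ) ≤ (1 / 2 * ‖p - x‖ ^ 2 + a : ℝ) := by
    have := hq p
    rw [hpa, hqb, ← EReal.coe_add, ← EReal.coe_add] at this
    exact_mod_cast this
  have h3 : (1 / 2 * ‖p - x‖ ^ 2 + a : ℝ) ≤ (1 / 2 * ‖m - x‖ ^ 2 + (a + b) / 2 : ℝ) := by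
    have := (hp m).trans (add_le_add_right hmid _)
    rw [hpa, ← EReal.coe_add, ← EReal.coe_add] at this
    exact_mod_cast this
  have hmx : m - x = (2⁻¹ : ℝ) • ((p - x) + (q - x)) := by
    rw [hm]; module
  have hnm : ‖m - x‖ = 2⁻¹ * ‖(p - x) + (q - x)‖ := by
    rw [hmx, norm_smul]; simp
  have hpar := parallelogram_law_with_norm ℝ (p - x) (q - x)
  have hd : (p - x) - (q - x) = p - q := by abel
  rw [hd] at hpar
  have hpq : ‖p - q‖ = 0 := by
    nlinarith [norm_nonneg (p - q), norm_nonneg ((p - x) + (q - x)),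
      norm_nonneg (p - x), norm_nonneg (q - x), sq_nonneg ‖p - q‖]
  exact sub_eq_zero.mp (norm_eq_zero.mp hpq)

lemma conj_ge {n : ℕ} (d x : Euc n) :
    ((inner ℝ x d : ℝ) : EReal) ≤ conjFn (iotaInd d) x := by
  have h := le_iSup (fun u : Euc n => (((inner ℝ x u : ℝ) : EReal) - iotaInd d u)) d
  simpa [iotaInd, conjFn] using h

lemma conj_ne_bot {n : ℕ} (d x : Euc n) : conjFn (iotaInd d) x ≠ ⊥ :=
  fun h => by simpa [h] using conj_ge d x

lemma conj_zero {n : ℕ} (d : Euc n) : conjFn (iotaInd d) 0 = 0 := by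
  apply le_antisymm
  · apply iSup_le
    intro u
    by_cases h : ∀ i, d i ≤ u i
    · simp [iotaInd, h]
    · simp [iotaInd, h, EReal.sub_top]
  · simpa using conj_ge d 0

lemma conj_mid {n : ℕ} (d p q : Euc n) {cp cq : ℝ}
    (hcp : conjFn (iotaInd d) p ≤ (cp : EReal))
    (hcq : conjFn (iotaInd d) q ≤ (cq : EReal)) :
    conjFn (iotaInd d) ((2⁻¹ : ℝ) • (p + q)) ≤ (((cp + cq) / 2 : ℝ) : EReal) := by
  apply iSup_le
  intro u
  by_cases h : ∀ i, d i ≤ u i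
  · have h1 : (inner ℝ p u : ℝ) ≤ cp := by
      have := (le_iSup (fun u : Euc n => (((inner ℝ p u : ℝ) : EReal) - iotaInd d u)) u).trans hcp
      simp only [iotaInd, if_pos h, sub_zero] at this
      exact_mod_cast this
    have h2 : (inner ℝ q u : ℝ) ≤ cq := by
      have := (le_iSup (fun u : Euc n => (((inner ℝ q u : ℝ) : EReal) - iotaInd d u)) u).trans hcq
      simp only [iotaInd, if_pos h, sub_zero] at this
      exact_mod_cast this
    have h3 : (inner ℝ ((2⁻¹ : ℝ) • (p + q)) u : ℝ)
        = 2⁻¹ * ((inner ℝ p u : ℝ) + (inner ℝ q u : ℝ)) := by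
      rw [real_inner_smul_left, inner_add_left]
    simp only [iotaInd, if_pos h, sub_zero]
    rw [EReal.coe_le_coe_iff, h3]
    linarith
  · simp [iotaInd, h, EReal.sub_top]

/-- Any point of the prox set of `η ι_d*` has a finite conjugate value. -/
lemma prox2_val {n : ℕ} (d : Euc n) {η : ℝ} (hη : 0 < η) {x r : Euc n}
    (hr : r ∈ proxSet (fun u => ((η : ℝ) : EReal) * conjFn (iotaInd d) u) x) :
    ∃ c : ℝ, conjFn (iotaInd d) r = (c : EReal) := by
  have hne_top : conjFn (iotaInd d) r ≠ ⊤ := by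
    intro htop
    have h0 := hr 0
    simp only [htop, conj_zero, mul_zero, EReal.coe_mul_top_of_pos hη,
      EReal.coe_add_top, add_zero, top_le_iff] at h0
    exact (EReal.coe_ne_top _) h0
  exact ⟨(conjFn (iotaInd d) r).toReal,
    (EReal.coe_toReal hne_top (conj_ne_bot d r)).symm⟩

/-- Fix(T_W) = Fix(T_{β,η}), where T_W = T_G ∘ (I − W⁻¹∇r).
Here `TG` is the operator T_G, characterized by its defining implicit fixed-point
property `hTG`; `Winv` is the (two-sided) inverse of `W`; and `r (v, y) = f v`, so
that `∇r z = (∇f z.1, 0)`.  A point `z` is a fixed point of `T_{β,η}` iff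
`z.1 = prox_{βg}(z.1 − β(∇f z.1 + Dᵀ z.2))` and `z.2 = prox_{η ι_d*}(z.2 + ηD z.1)`. -/
theorem stmt3 {m₁ m₂ : ℕ} (D : Matrix (Fin m₂) (Fin m₁) ℝ) (d : Euc m₂)
    (f g : Euc m₁ → ℝ) (L : ℝ)
    (hfdiff : Differentiable ℝ f) (hfconv : ConvexOn ℝ Set.univ f)
    (hflip : ∀ x y : Euc m₁, ‖gradient f x - gradient f y‖ ≤ L * ‖x - y‖)
    (hgconv : ConvexOn ℝ Set.univ g)
    (β η : ℝ) (hβ : 0 < β) (hη : 0 < η)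
    (TG : Euc m₁ × Euc m₂ → Euc m₁ × Euc m₂)
    (hTG : ∀ w : Euc m₁ × Euc m₂,
      (TG w).1 ∈ proxSet (fun u => ((β * g u : ℝ) : EReal))
          (w.1 - β • mVec D.transpose w.2) ∧
      (TG w).2 ∈ proxSet (fun u => ((η : ℝ) : EReal) * conjFn (iotaInd d) u)
          ((2 * η) • mVec D (TG w).1 - η • mVec D w.1 + w.2))
    (Winv : Euc m₁ × Euc m₂ → Euc m₁ × Euc m₂)
    (hWinv₁ : ∀ z, Wapp β η D (Winv z) = z)
    (hWinv₂ : ∀ z, Winv (Wapp β η D z) = z) :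
    {z : Euc m₁ × Euc m₂ | TG (z - Winv (gradient f z.1, 0)) = z} =
    {z : Euc m₁ × Euc m₂ |
      z.1 ∈ proxSet (fun u => ((β * g u : ℝ) : EReal))
          (z.1 - β • (gradient f z.1 + mVec D.transpose z.2)) ∧
      z.2 ∈ proxSet (fun u => ((η : ℝ) : EReal) * conjFn (iotaInd d) u)
          (z.2 + η • mVec D z.1)} := by
  ext z
  simp only [Set.mem_setOf_eq]
  set u : Euc m₁ × Euc m₂ := Winv (gradient f z.1, 0) with hu
  set w : Euc m₁ × Euc m₂ := z - u with hw
  have hWu : Wapp β η D u = (gradient f z.1, 0) := hWinv₁ _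
  have E1 : (1 / β) • u.1 - mVec D.transpose u.2 = gradient f z.1 :=
    congrArg Prod.fst hWu
  have E2 : -(mVec D u.1) + (1 / η) • u.2 = (0 : Euc m₂) :=
    congrArg Prod.snd hWu
  have hu1 : u.1 = β • gradient f z.1 + β • mVec D.transpose u.2 := by
    have h := congrArg (fun v : Euc m₁ => β • v) E1
    simp only [smul_sub, smul_smul] at h
    rw [mul_one_div_cancel hβ.ne', one_smul] at h
    rw [← h]; abel
  have hu2 : u.2 = η • mVec D u.1 := by
    have h := congrArg (fun v : Euc m₂ => η • v) E2
    simp only [smul_add, smul_neg, smul_smul, smul_zero] at h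
    rw [mul_one_div_cancel hη.ne', one_smul] at h
    refine eq_of_sub_eq_zero ?_
    rw [← h]; abel
  have hw1 : w.1 = z.1 - u.1 := rfl
  have hw2 : w.2 = z.2 - u.2 := rfl
  have warg1 : w.1 - β • mVec D.transpose w.2
      = z.1 - β • (gradient f z.1 + mVec D.transpose z.2) := by
    rw [hw1, hw2, mVec_sub]
    rw [hu1]
    module
  have warg2 : ∀ v : Euc m₁ × Euc m₂, v.1 = z.1 →
      (2 * η) • mVec D v.1 - η • mVec D w.1 + w.2 = z.2 + η • mVec D z.1 := by
    intro v hv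
    rw [hv, hw1, hw2, mVec_sub, hu2]
    module
  constructor
  · intro h
    obtain ⟨hT1, hT2⟩ := hTG w
    rw [warg1] at hT1
    rw [warg2 (TG w) (by rw [h])] at hT2
    rw [h] at hT1 hT2
    exact ⟨hT1, hT2⟩
  · rintro ⟨hz1, hz2⟩
    obtain ⟨hT1, hT2⟩ := hTG w
    rw [warg1] at hT1
    -- first component via uniqueness of prox of βg
    have h1 : (TG w).1 = z.1 := by
      refine prox_unique hT1 hz1 (a := β * g (TG w).1) (b := β * g z.1) rfl rfl ?_
      have hc := hgconv.2 (Set.mem_univ (TG w).1) (Set.mem_univ z.1)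
        (by norm_num : (0:ℝ) ≤ 2⁻¹) (by norm_num : (0:ℝ) ≤ 2⁻¹) (by norm_num)
      rw [EReal.coe_le_coe_iff]
      have hsm : (2⁻¹ : ℝ) • ((TG w).1 + z.1) = (2⁻¹ : ℝ) • (TG w).1 + (2⁻¹ : ℝ) • z.1 :=
        smul_add _ _ _
      rw [hsm]
      simp only [smul_eq_mul] at hc
      nlinarith [hc]
    rw [warg2 (TG w) h1] at hT2
    -- second component via uniqueness of prox of η ι_d*
    have h2 : (TG w).2 = z.2 := by
      obtain ⟨cp, hcp⟩ := prox2_val d hη hT2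
      obtain ⟨cq, hcq⟩ := prox2_val d hη hz2
      refine prox_unique hT2 hz2 (a := η * cp) (b := η * cq) ?_ ?_ ?_
      · rw [hcp, ← EReal.coe_mul]
      · rw [hcq, ← EReal.coe_mul]
      · have hmid := conj_mid d (TG w).2 z.2 hcp.le hcq.le
        have hη' : (0 : EReal) ≤ ((η : ℝ) : EReal) := by exact_mod_cast hη.le
        have := mul_le_mul_of_nonneg_left hmid hη'
        rw [← EReal.coe_mul] at this
        have heq : η * ((cp + cq) / 2) = (η * cp + η * cq) / 2 := by ring
        rw [heq] at this
        exact this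
    exact Prod.ext h1 h2
end
end
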